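/- Let H be a graph with ν(H) ≤ k−1, Δ(H) ≤ k−1, and e(H) = f(k−1,k−1) (k ≥ 4 even). Let (D,A,C) be the Gallai–Edmonds decomposition of H. Then A is an independent set in H and every vertex of A has degree exactly k−1 in H. -/

import Mathlib

open SimpleGraph

/-- Number of edges of a graph. -/
noncomputable def edgeCount {V : Type*} (G : SimpleGraph V) : ℕ := G.edgeSet.ncard

/-- Degree of a vertex. -/
noncomputable def deg {V : Type*} (G : SimpleGraph V) (v : V) : ℕ := (G.neighborSet v).ncard

/-- Maximum degree. -/
noncomputable def maxDeg {V : Type*} (G : SimpleGraph V) : ℕ := sSup (Set.range (deg G))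

/-- Matching number: maximum size of a matching. -/
noncomputable def matchNum {V : Type*} (G : SimpleGraph V) : ℕ :=
  sSup {n | ∃ M : G.Subgraph, M.IsMatching ∧ M.edgeSet.ncard = n}

/-- `G` contains a copy of `H` (a subgraph isomorphic to `H`). -/
def CopyIn {α β : Type*} (H : SimpleGraph α) (G : SimpleGraph β) : Prop :=
  ∃ f : H →g G, Function.Injective f

/-- The friendship graph `F_k`: `k` triangles sharing exactly one common vertex (vertex 0). -/
def friendship (k : ℕ) : SimpleGraph (Fin (2 * k + 1)) :=
  SimpleGraph.fromRel (fun a b => a.val = 0 ∨ b.val = 0 ∨ (a.val + 1) / 2 = (b.val + 1) / 2)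

/-- The star `K_{1,m}` with center 0 and `m` leaves. -/
def starGraph (m : ℕ) : SimpleGraph (Fin (m + 1)) :=
  SimpleGraph.fromRel (fun a b => a.val = 0 ∨ b.val = 0)

/-- The matching `mK_2` of `m` disjoint edges. -/
def matchGraph (m : ℕ) : SimpleGraph (Fin (2 * m)) :=
  SimpleGraph.fromRel (fun a b => a.val / 2 = b.val / 2)

/-- Turán number: max edges of an `n`-vertex graph with no copy of `H`. -/
noncomputable def exNum (n : ℕ) {α : Type*} (H : SimpleGraph α) : ℕ :=
  sSup {m | ∃ G : SimpleGraph (Fin n), ¬ CopyIn H G ∧ edgeCount G = m}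

/-- `f(ν, Δ)`: max edges of a graph with matching number ≤ ν and max degree ≤ Δ. -/
noncomputable def fMax (ν Δ : ℕ) : ℕ :=
  sSup {m | ∃ (n : ℕ) (G : SimpleGraph (Fin n)),
    matchNum G ≤ ν ∧ (∀ v, deg G v ≤ Δ) ∧ edgeCount G = m}

/-- A surjective edge-coloring of `K_n` using exactly `r` colors `0, …, r-1`. -/
def IsSurjColoring (n r : ℕ) (c : Sym2 (Fin n) → ℕ) : Prop :=
  (∀ e : Sym2 (Fin n), ¬ e.IsDiag → c e < r) ∧
  ∀ i < r, ∃ e : Sym2 (Fin n), ¬ e.IsDiag ∧ c e = i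

/-- The colored `K_n` contains a rainbow copy of `H`. -/
def RainbowCopy {α : Type*} {n : ℕ} (c : Sym2 (Fin n) → ℕ) (H : SimpleGraph α) : Prop :=
  ∃ f : H →g (⊤ : SimpleGraph (Fin n)), Function.Injective f ∧
    Set.InjOn (fun e => c (Sym2.map (⇑f) e)) H.edgeSet

/-- Anti-Ramsey number for the pair `{K_{1,k+1}, (k+1)K_2}`. -/
noncomputable def arPair (n k : ℕ) : ℕ :=
  sInf {r | ∀ c : Sym2 (Fin n) → ℕ, IsSurjColoring n r c →
    RainbowCopy c (_root_.starGraph (k + 1)) ∨ RainbowCopy c (matchGraph (k + 1))}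

/-- Anti-Ramsey number of the friendship graph `F_k`. -/
noncomputable def arFriend (n k : ℕ) : ℕ :=
  sInf {r | ∀ c : Sym2 (Fin n) → ℕ, IsSurjColoring n r c → RainbowCopy c (friendship k)}

/-- Anti-Ramsey number of a general graph `G`. -/
noncomputable def arGraph (n : ℕ) {α : Type*} (G : SimpleGraph α) : ℕ :=
  sInf {r | ∀ c : Sym2 (Fin n) → ℕ, IsSurjColoring n r c → RainbowCopy c G}

/-- Turán number of the family `{G − e : e ∈ E(G)}`. -/
noncomputable def exFamDel (n : ℕ) {α : Type*} (G : SimpleGraph α) : ℕ :=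
  sSup {m | ∃ H : SimpleGraph (Fin n),
    (∀ e ∈ G.edgeSet, ¬ CopyIn (G.deleteEdges {e}) H) ∧ edgeCount H = m}

section Aux

variable {V W : Type*}

/-- edge set of a mapped subgraph -/
lemma subgraph_edgeSet_map {G : SimpleGraph V} {G₂ : SimpleGraph W} (f : G →g G₂)
    (M : G.Subgraph) : (M.map f).edgeSet = Sym2.map f '' M.edgeSet := by
  ext e
  induction e using Sym2.ind with
  | _ x y =>
    constructor
    · intro h
      rw [Subgraph.mem_edgeSet] at h
      obtain ⟨a, b, hab, rfl, rfl⟩ := h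
      exact ⟨s(a, b), hab, by simp⟩
    · rintro ⟨e', he', hmap⟩
      induction e' using Sym2.ind with
      | _ a b =>
        rw [Sym2.map_pair_eq] at hmap
        rw [← hmap, Subgraph.mem_edgeSet]
        exact ⟨a, b, he', rfl, rfl⟩

lemma matchings_le_of_iso {G : SimpleGraph V} {G₂ : SimpleGraph W} (φ : G ≃g G₂) {c : ℕ}
    (h : ∀ M : G.Subgraph, M.IsMatching → M.edgeSet.ncard ≤ c) :
    ∀ M : G₂.Subgraph, M.IsMatching → M.edgeSet.ncard ≤ c := by
  intro M hM
  have hinj : Function.Injective (φ.symm : G₂ →g G) := by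
    intro a b hab
    exact φ.symm.injective hab
  have h2 := h (M.map (φ.symm : G₂ →g G)) (hM.map _ hinj)
  rwa [subgraph_edgeSet_map, Set.ncard_image_of_injective _ (Sym2.map.injective hinj)] at h2

lemma matchNum_le' {G : SimpleGraph V} {c : ℕ}
    (h : ∀ M : G.Subgraph, M.IsMatching → M.edgeSet.ncard ≤ c) : matchNum G ≤ c := by
  have h0 : ∃ M : G.Subgraph, M.IsMatching ∧ M.edgeSet.ncard = 0 :=
    ⟨⊥, fun v hv => by simp [Subgraph.verts_bot] at hv, by simp [Subgraph.edgeSet_bot]⟩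
  refine csSup_le ⟨0, h0⟩ ?_
  rintro n ⟨M, hM, rfl⟩
  exact h M hM

lemma matching_le_matchNum [Finite V] {G : SimpleGraph V} (M : G.Subgraph)
    (hM : M.IsMatching) : M.edgeSet.ncard ≤ matchNum G := by
  have hmem : M.edgeSet.ncard ∈ {n | ∃ M : G.Subgraph, M.IsMatching ∧ M.edgeSet.ncard = n} :=
    ⟨M, hM, rfl⟩
  have hbdd : BddAbove {n | ∃ M : G.Subgraph, M.IsMatching ∧ M.edgeSet.ncard = n} := by
    refine ⟨G.edgeSet.ncard, ?_⟩
    rintro n ⟨N, hN, rfl⟩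
    exact Set.ncard_le_ncard N.edgeSet_subset G.edgeSet.toFinite
  exact le_csSup hbdd hmem

end Aux

section AddVert

variable {V : Type*}

/-- Add one new vertex joined to every vertex of `P`. -/
def addVert (H0 : SimpleGraph V) (P : Set V) : SimpleGraph (V ⊕ Unit) where
  Adj x y := match x, y with
    | Sum.inl a, Sum.inl b => H0.Adj a b
    | Sum.inl a, Sum.inr _ => a ∈ P
    | Sum.inr _, Sum.inl b => b ∈ P
    | Sum.inr _, Sum.inr _ => False
  symm := by
    constructor
    rintro (a | a) (b | b) h
    · exact H0.adj_symm h
    · exact h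
    · exact h
    · exact h.elim
  loopless := by
    constructor
    rintro (a | a) h
    · exact H0.irrefl h
    · exact h

variable {H0 : SimpleGraph V} {P : Set V}

@[simp] lemma addVert_adj_inl_inl {a b : V} :
    (addVert H0 P).Adj (Sum.inl a) (Sum.inl b) ↔ H0.Adj a b := Iff.rfl

@[simp] lemma addVert_adj_inl_inr {a : V} {u : Unit} :
    (addVert H0 P).Adj (Sum.inl a) (Sum.inr u) ↔ a ∈ P := Iff.rfl

@[simp] lemma addVert_adj_inr_inl {a : V} {u : Unit} :
    (addVert H0 P).Adj (Sum.inr u) (Sum.inl a) ↔ a ∈ P := Iff.rfl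

@[simp] lemma addVert_adj_inr_inr {u u' : Unit} :
    ¬ (addVert H0 P).Adj (Sum.inr u) (Sum.inr u') := fun h => h

lemma addVert_edgeSet :
    (addVert H0 P).edgeSet =
      (Sym2.map Sum.inl '' H0.edgeSet) ∪ ((fun a => s(Sum.inl a, Sum.inr ())) '' P) := by
  ext e
  induction e using Sym2.ind with
  | _ x y =>
    rw [mem_edgeSet]
    constructor
    · intro h
      match x, y with
      | Sum.inl a, Sum.inl b =>
        exact Or.inl ⟨s(a, b), h, by simp⟩
      | Sum.inl a, Sum.inr u =>
        exact Or.inr ⟨a, h, by cases u; first | rfl | exact Sym2.eq_swap⟩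
      | Sum.inr u, Sum.inl b =>
        exact Or.inr ⟨b, h, by cases u; first | rfl | exact Sym2.eq_swap⟩
      | Sum.inr u, Sum.inr u' => exact h.elim
    · rintro (⟨e', he', hmap⟩ | ⟨a, ha, heq⟩)
      · induction e' using Sym2.ind with
        | _ a b =>
          rw [Sym2.map_pair_eq, Sym2.eq_iff] at hmap
          rcases hmap with ⟨rfl, rfl⟩ | ⟨rfl, rfl⟩
          · exact he'
          · exact H0.adj_symm he'
      · rw [Sym2.eq_iff] at heq
        rcases heq with ⟨h1, h2⟩ | ⟨h1, h2⟩
        · rw [← h1, ← h2]; exact ha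
        · rw [← h1, ← h2]; exact ha

lemma addVert_edgeCount [Finite V] :
    edgeCount (addVert H0 P) = edgeCount H0 + P.ncard := by
  have hdisj : Disjoint (Sym2.map (Sum.inl : V → V ⊕ Unit) '' H0.edgeSet)
      ((fun a => s(Sum.inl a, Sum.inr ())) '' P) := by
    rw [Set.disjoint_left]
    rintro e ⟨e', he', rfl⟩ ⟨a, ha, heq⟩
    have h1 : Sum.inr () ∈ Sym2.map (Sum.inl : V → V ⊕ Unit) e' := by
      rw [← heq]; simp
    rw [Sym2.mem_map] at h1
    obtain ⟨b, _, hb⟩ := h1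
    exact Sum.inl_ne_inr hb
  have hinj2 : Function.Injective (fun a : V => s(Sum.inl a, (Sum.inr () : V ⊕ Unit))) := by
    intro a b hab
    simp only [Sym2.eq_iff] at hab
    rcases hab with ⟨h1, _⟩ | ⟨h1, _⟩
    · exact Sum.inl_injective h1
    · exact (Sum.inl_ne_inr h1).elim
  rw [edgeCount, addVert_edgeSet, Set.ncard_union_eq hdisj (Set.toFinite _) (Set.toFinite _),
    Set.ncard_image_of_injective _ (Sym2.map.injective Sum.inl_injective),
    Set.ncard_image_of_injective _ hinj2, edgeCount]

lemma addVert_nbr_inl_mem {a : V} (ha : a ∈ P) :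
    (addVert H0 P).neighborSet (Sum.inl a) =
      insert (Sum.inr ()) (Sum.inl '' H0.neighborSet a) := by
  ext x
  match x with
  | Sum.inl b =>
    simp only [mem_neighborSet, addVert_adj_inl_inl, Set.mem_insert_iff, Set.mem_image]
    constructor
    · intro h; exact Or.inr ⟨b, h, rfl⟩
    · rintro (h | ⟨c, hc, hcb⟩)
      · exact (Sum.inl_ne_inr h).elim
      · rwa [← Sum.inl_injective hcb]
  | Sum.inr u =>
    cases u
    simp [ha]

lemma addVert_nbr_inl_not_mem {a : V} (ha : a ∉ P) :
    (addVert H0 P).neighborSet (Sum.inl a) = Sum.inl '' H0.neighborSet a := by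
  ext x
  match x with
  | Sum.inl b =>
    simp only [mem_neighborSet, addVert_adj_inl_inl, Set.mem_image]
    constructor
    · intro h; exact ⟨b, h, rfl⟩
    · rintro ⟨c, hc, hcb⟩
      rwa [← Sum.inl_injective hcb]
  | Sum.inr u =>
    cases u
    simp [ha]

lemma addVert_deg_inl_mem [Finite V] {a : V} (ha : a ∈ P) :
    deg (addVert H0 P) (Sum.inl a) = deg H0 a + 1 := by
  rw [deg, addVert_nbr_inl_mem ha, Set.ncard_insert_of_notMem,
    Set.ncard_image_of_injective _ Sum.inl_injective, deg]
  rintro ⟨b, _, hb⟩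
  exact Sum.inl_ne_inr hb

lemma addVert_deg_inl_not_mem {a : V} (ha : a ∉ P) :
    deg (addVert H0 P) (Sum.inl a) = deg H0 a := by
  rw [deg, addVert_nbr_inl_not_mem ha,
    Set.ncard_image_of_injective _ Sum.inl_injective, deg]

lemma addVert_deg_inr (u : Unit) :
    deg (addVert H0 P) (Sum.inr u) = P.ncard := by
  have h : (addVert H0 P).neighborSet (Sum.inr u) = Sum.inl '' P := by
    ext x
    match x with
    | Sum.inl b => simp
    | Sum.inr u' =>
      simp only [mem_neighborSet, Set.mem_image]
      constructor
      · intro h; exact (addVert_adj_inr_inr h).elim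
      · rintro ⟨c, _, hc⟩; exact (Sum.inl_ne_inr hc).elim
  rw [deg, h, Set.ncard_image_of_injective _ Sum.inl_injective]

end AddVert

section MatchBound

variable {V : Type*}

/-- Key lemma: matchings of `addVert H0 P` have at most `ν` edges, provided all matchings of `K`
have at most `ν` edges, `H0 ≤ K`, and no vertex of `P` is missed by a `ν`-edge matching of `K`. -/
lemma addVert_matching_bound [Finite V] {K H0 : SimpleGraph V} (hle : ∀ a b, H0.Adj a b → K.Adj a b)
    {P : Set V} {ν : ℕ}
    (hν : ∀ M : K.Subgraph, M.IsMatching → M.edgeSet.ncard ≤ ν)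
    (hP : ∀ a ∈ P, ¬ ∃ M : K.Subgraph, M.IsMatching ∧ M.edgeSet.ncard = ν ∧ a ∉ M.verts) :
    ∀ M' : (addVert H0 P).Subgraph, M'.IsMatching → M'.edgeSet.ncard ≤ ν := by
  intro M' hM'
  -- the restriction of M' to V
  set Mres : K.Subgraph :=
    { verts := {a | ∃ b, M'.Adj (Sum.inl a) (Sum.inl b)}
      Adj := fun a b => M'.Adj (Sum.inl a) (Sum.inl b)
      adj_sub := fun h => hle _ _ (M'.adj_sub h)
      edge_vert := fun h => ⟨_, h⟩
      symm := ⟨fun a b h => M'.adj_symm h⟩ } with hMres_def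
  have hMres : Mres.IsMatching := by
    rintro a ⟨b, hb⟩
    refine ⟨b, hb, ?_⟩
    intro c hc
    have huniq := hM' (M'.edge_vert hb)
    obtain ⟨w, _, hwu⟩ := huniq
    exact Sum.inl_injective ((hwu _ hc).trans (hwu _ hb).symm)
  have himg : Sym2.map (Sum.inl : V → V ⊕ Unit) '' Mres.edgeSet
      = {e ∈ M'.edgeSet | Sum.inr () ∉ e} := by
    ext e
    constructor
    · rintro ⟨e', he', rfl⟩
      induction e' using Sym2.ind with
      | _ a b =>
        rw [Subgraph.mem_edgeSet] at he'
        constructor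
        · rw [Sym2.map_pair_eq, Subgraph.mem_edgeSet]
          exact he'
        · rw [Sym2.map_pair_eq, Sym2.mem_iff]
          rintro (h | h) <;> exact Sum.inl_ne_inr h.symm
    · rintro ⟨he, hinr⟩
      induction e using Sym2.ind with
      | _ x y =>
        rw [Subgraph.mem_edgeSet] at he
        rw [Sym2.mem_iff] at hinr
        push_neg at hinr
        obtain ⟨h1, h2⟩ := hinr
        match x, y with
        | Sum.inl a, Sum.inl b =>
          exact ⟨s(a, b), he, by rw [Sym2.map_pair_eq]⟩
        | Sum.inl a, Sum.inr u => exact (h2 (by cases u; rfl)).elim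
        | Sum.inr u, _ => exact (h1 (by cases u; rfl)).elim
  have hcard_img : (Sym2.map (Sum.inl : V → V ⊕ Unit) '' Mres.edgeSet).ncard
      = Mres.edgeSet.ncard :=
    Set.ncard_image_of_injective _ (Sym2.map.injective Sum.inl_injective)
  by_cases hinr : Sum.inr () ∈ M'.verts
  · -- the new vertex is matched, to some `Sum.inl a` with `a ∈ P`
    obtain ⟨w, hw, hwu⟩ := hM' hinr
    obtain ⟨a, rfl⟩ : ∃ a, w = Sum.inl a := by
      match w with
      | Sum.inl a => exact ⟨a, rfl⟩
      | Sum.inr u => cases u; exact ((addVert_adj_inr_inr (M'.adj_sub hw))).elim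
    have haP : a ∈ P := M'.adj_sub hw
    have hsplit : M'.edgeSet = insert s(Sum.inr (), Sum.inl a) {e ∈ M'.edgeSet | Sum.inr () ∉ e} := by
      ext e
      constructor
      · intro he
        by_cases hmem : Sum.inr () ∈ e
        · left
          induction e using Sym2.ind with
          | _ x y =>
            rw [Subgraph.mem_edgeSet] at he
            rw [Sym2.mem_iff] at hmem
            rcases hmem with rfl | rfl
            · rw [hwu _ he]
            · rw [hwu _ he.symm, Sym2.eq_swap]
        · exact Or.inr ⟨he, hmem⟩
      · rintro (rfl | ⟨he, _⟩)
        · rw [Subgraph.mem_edgeSet]; exact hw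
        · exact he
    have hnotmem : s(Sum.inr (), Sum.inl a) ∉ {e ∈ M'.edgeSet | Sum.inr () ∉ e} := by
      rintro ⟨_, hno⟩
      exact hno (by rw [Sym2.mem_iff]; left; rfl)
    have hcard : M'.edgeSet.ncard = Mres.edgeSet.ncard + 1 := by
      rw [hsplit, Set.ncard_insert_of_notMem hnotmem (Set.toFinite _), ← himg, hcard_img]
    have hamiss : a ∉ Mres.verts := by
      rintro ⟨b, hb⟩
      have h1 := hM' (M'.edge_vert hb)
      obtain ⟨z, _, hzu⟩ := h1
      have e1 := hzu _ hb
      have e2 := hzu _ hw.symm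
      exact Sum.inl_ne_inr (e1.trans e2.symm)
    have hle1 : Mres.edgeSet.ncard ≤ ν := hν Mres hMres
    have hne : Mres.edgeSet.ncard ≠ ν := by
      intro hcontra
      exact hP a haP ⟨Mres, hMres, hcontra, hamiss⟩
    omega
  · -- the new vertex is unmatched: all edges avoid it
    have hall : {e ∈ M'.edgeSet | Sum.inr () ∉ e} = M'.edgeSet := by
      ext e
      refine ⟨fun h => h.1, fun he => ⟨he, fun hmem => hinr ?_⟩⟩
      induction e using Sym2.ind with
      | _ x y =>
        rw [Subgraph.mem_edgeSet] at he
        rw [Sym2.mem_iff] at hmem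
        rcases hmem with rfl | rfl
        · exact M'.edge_vert he
        · exact M'.edge_vert he.symm
    rw [← hall, ← himg, hcard_img]
    exact hν Mres hMres

end MatchBound

section FMax

lemma edgeCount_eq_of_iso {V W : Type*} {G : SimpleGraph V} {G₂ : SimpleGraph W} (φ : G ≃g G₂) :
    edgeCount G = edgeCount G₂ := by
  rw [edgeCount, edgeCount, ← Nat.card_coe_set_eq, ← Nat.card_coe_set_eq]
  exact Nat.card_congr φ.mapEdgeSet

lemma le_fMax_or {W : Type*} [Fintype W] (ν Δ : ℕ) (G : SimpleGraph W)
    (h1 : ∀ M : G.Subgraph, M.IsMatching → M.edgeSet.ncard ≤ ν) (h2 : ∀ v, deg G v ≤ Δ) :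
    edgeCount G ≤ fMax ν Δ ∨ fMax ν Δ = 0 := by
  classical
  set n := Fintype.card W with hn
  set e : W ≃ Fin n := Fintype.equivFin W with he
  set G₂ : SimpleGraph (Fin n) := G.comap e.symm.toEmbedding with hG₂
  have φ : G₂ ≃g G := Iso.comap e.symm G
  have hmatch : matchNum G₂ ≤ ν := matchNum_le' (matchings_le_of_iso φ.symm h1)
  have hdeg : ∀ v, deg G₂ v ≤ Δ := by
    intro v
    have hnbr : G₂.neighborSet v = e '' (G.neighborSet (e.symm v)) := by
      ext y
      simp only [mem_neighborSet, hG₂, comap_adj, Equiv.toEmbedding_apply, Set.mem_image]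
      constructor
      · intro h
        exact ⟨e.symm y, h, by simp⟩
      · rintro ⟨c, hc, rfl⟩
        simpa using hc
    rw [deg, hnbr, Set.ncard_image_of_injective _ e.injective]
    exact h2 _
  have hec : edgeCount G₂ = edgeCount G := edgeCount_eq_of_iso φ
  have hmem : edgeCount G ∈ {m | ∃ (n : ℕ) (G : SimpleGraph (Fin n)),
      matchNum G ≤ ν ∧ (∀ v, deg G v ≤ Δ) ∧ edgeCount G = m} :=
    ⟨n, G₂, hmatch, hdeg, hec⟩
  by_cases hbdd : BddAbove {m | ∃ (n : ℕ) (G : SimpleGraph (Fin n)),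
      matchNum G ≤ ν ∧ (∀ v, deg G v ≤ Δ) ∧ edgeCount G = m}
  · exact Or.inl (le_csSup hbdd hmem)
  · right
    rw [fMax, csSup_of_not_bddAbove hbdd, csSup_empty]
    rfl

end FMax


/-- Claim 1: in an extremal graph for `f(k-1, k-1)` (`k ≥ 4` even), the Gallai–Edmonds
set `A` is independent and each of its vertices has degree exactly `k-1`. -/
theorem stmt14 {V : Type*} [Fintype V] (k : ℕ) (hk : 4 ≤ k) (hkeven : Even k)
    (H : SimpleGraph V)
    (hm : matchNum H ≤ k - 1) (hd : ∀ v, deg H v ≤ k - 1)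
    (he : edgeCount H = fMax (k - 1) (k - 1)) :
    let D : Set V := {v | ∃ M : H.Subgraph, M.IsMatching ∧
      M.edgeSet.ncard = matchNum H ∧ v ∉ M.verts}
    let A : Set V := {v | v ∉ D ∧ ∃ u ∈ D, H.Adj v u}
    (∀ u ∈ A, ∀ v ∈ A, ¬ H.Adj u v) ∧ (∀ v ∈ A, deg H v = k - 1) := by
  intro D A
  have hmatch : ∀ M : H.Subgraph, M.IsMatching → M.edgeSet.ncard ≤ matchNum H :=
    fun M hM => matching_le_matchNum M hM
  -- the common contradiction engine
  have contra : ∀ (H0 : SimpleGraph V) (P : Set V),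
      (∀ a b, H0.Adj a b → H.Adj a b) →
      (∀ a ∈ P, ¬ ∃ M : H.Subgraph, M.IsMatching ∧ M.edgeSet.ncard = matchNum H ∧ a ∉ M.verts) →
      (∀ x, deg (addVert H0 P) x ≤ k - 1) →
      (edgeCount (addVert H0 P) = edgeCount H + 1) →
      H.edgeSet.Nonempty → False := by
    intro H0 P hle hP hdeg hec hne
    have hb := addVert_matching_bound hle hmatch hP
    have hb' : ∀ M' : (addVert H0 P).Subgraph, M'.IsMatching → M'.edgeSet.ncard ≤ k - 1 :=
      fun M' h => le_trans (hb M' h) hm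
    rcases le_fMax_or (k - 1) (k - 1) (addVert H0 P) hb' hdeg with h | h
    · rw [hec, ← he] at h
      omega
    · rw [h] at he
      have hpos : 0 < edgeCount H := (Set.ncard_pos (H.edgeSet.toFinite)).mpr hne
      omega
  constructor
  · -- A is independent
    intro u hu v hv hadj
    obtain ⟨huD, d, hdD, hudAdj⟩ := hu
    obtain ⟨hvD, -⟩ := hv
    have huv : u ≠ v := H.ne_of_adj hadj
    set H0 := H.deleteEdges {s(u, v)} with hH0
    refine contra H0 {u, v} (fun a b h => ((H.deleteEdges_adj).mp h).1) ?_ ?_ ?_ ⟨s(u, v), hadj⟩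
    · intro a ha
      simp only [Set.mem_insert_iff, Set.mem_singleton_iff] at ha
      rcases ha with rfl | rfl
      · exact huD
      · exact hvD
    · intro x
      match x with
      | Sum.inr u' =>
        rw [addVert_deg_inr, Set.ncard_pair huv]
        omega
      | Sum.inl a =>
        by_cases ha : a ∈ ({u, v} : Set V)
        · rw [addVert_deg_inl_mem ha]
          simp only [Set.mem_insert_iff, Set.mem_singleton_iff] at ha
          rcases ha with rfl | rfl
          · have hsub : H0.neighborSet a ⊆ H.neighborSet a \ {v} := by
              intro b hb
              rw [mem_neighborSet, hH0, deleteEdges_adj] at hb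
              refine ⟨hb.1, ?_⟩
              intro hbv
              rw [Set.mem_singleton_iff] at hbv
              subst hbv
              exact hb.2 rfl
            have h1 : (H.neighborSet a \ {v}).ncard + 1 = (H.neighborSet a).ncard :=
              Set.ncard_diff_singleton_add_one (show v ∈ H.neighborSet a from hadj)
                (Set.toFinite _)
            have h2 : deg H0 a ≤ (H.neighborSet a \ {v}).ncard :=
              Set.ncard_le_ncard hsub (Set.toFinite _)
            have h3 := hd a
            have h4 : deg H a = (H.neighborSet a).ncard := rfl
            omega
          · have hsub : H0.neighborSet a ⊆ H.neighborSet a \ {u} := by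
              intro b hb
              rw [mem_neighborSet, hH0, deleteEdges_adj] at hb
              refine ⟨hb.1, ?_⟩
              intro hbu
              rw [Set.mem_singleton_iff] at hbu
              subst hbu
              exact hb.2 (Set.mem_singleton_iff.mpr Sym2.eq_swap)
            have h1 : (H.neighborSet a \ {u}).ncard + 1 = (H.neighborSet a).ncard :=
              Set.ncard_diff_singleton_add_one (show u ∈ H.neighborSet a from hadj.symm)
                (Set.toFinite _)
            have h2 : deg H0 a ≤ (H.neighborSet a \ {u}).ncard :=
              Set.ncard_le_ncard hsub (Set.toFinite _)
            have h3 := hd a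
            have h4 : deg H a = (H.neighborSet a).ncard := rfl
            omega
        · rw [addVert_deg_inl_not_mem ha]
          have hsub : H0.neighborSet a ⊆ H.neighborSet a := by
            intro b hb
            rw [mem_neighborSet, hH0, deleteEdges_adj] at hb
            exact hb.1
          have h2 : deg H0 a ≤ deg H a := Set.ncard_le_ncard hsub (Set.toFinite _)
          exact le_trans h2 (hd a)
    · rw [addVert_edgeCount, Set.ncard_pair huv]
      have h1 : edgeCount H0 + 1 = edgeCount H := by
        rw [edgeCount, hH0, edgeSet_deleteEdges]
        exact Set.ncard_diff_singleton_add_one hadj (Set.toFinite _)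
      omega
  · -- every vertex of A has degree k - 1
    intro u hu
    obtain ⟨huD, d, hdD, hudAdj⟩ := hu
    by_contra hne
    have hlt : deg H u + 1 ≤ k - 1 := by
      have := hd u
      omega
    refine contra H {u} (fun a b h => h) ?_ ?_ ?_ ⟨s(u, d), hudAdj⟩
    · intro a ha
      rw [Set.mem_singleton_iff] at ha
      subst ha
      exact huD
    · intro x
      match x with
      | Sum.inr u' =>
        rw [addVert_deg_inr, Set.ncard_singleton]
        omega
      | Sum.inl a =>
        by_cases ha : a ∈ ({u} : Set V)
        · rw [Set.mem_singleton_iff] at ha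
          subst ha
          rw [addVert_deg_inl_mem (Set.mem_singleton a)]
          exact hlt
        · rw [addVert_deg_inl_not_mem ha]
          exact hd a
    · rw [addVert_edgeCount, Set.ncard_singleton]
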